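/- Let V, Q be Hilbert spaces, a_h : V × V → ℝ bounded and coercive bilinear form with constants and b_h : V × Q → ℝ bounded bilinear form satisfying the discrete inf-sup condition with constant β' > 0, c₁_h : Q × Q → ℝ positive semi-definite, and suppose the homogeneous system a_h(u,v) + b_h(v,p) = 0 ∀v, b_h(u,q) − c₁_h(p,q) + d_h(q,w) = 0 ∀q, e_h(p,ζ) + c₂_h(w,ζ) = 0 ∀ζ holds, where after diagonal testing the cross terms combine to −2b₃_h(p,w) with |b₃_h(p,w)| ≤ (1/τ)‖p‖_Q‖w‖_W and c₁_h, c₂_h have lower bounds with constants satisfying the compatibility 1/(c₀/C_{s2}) < ε < (ρ_p/τ²)/C_{s4} for some ε. Then u = 0, p = 0 (its H¹-part), and w = 0. -/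

import Mathlib

set_option maxHeartbeats 1000000 in
/-- Uniqueness for the homogeneous discrete system: with `a_h` coercive, `b_h`
satisfying the discrete inf-sup condition with constant `β' > 0`, stabilised lower
bounds for `c₁_h` and `c₂_h`, the cross terms combining to `−2b₃_h(p,w)` after
diagonal testing, the bound `|b₃_h(p,w)| ≤ (1/τ)‖p‖‖w‖` (in the `L²`-type seminorms
`φ0`, `w0`), and the compatibility `C_{s2}/c₀ < ε < (ρ_p/τ²)/C_{s4}`, the homogeneous
system forces `u = 0`, `p = 0` and `w = 0`.  Here `V` is the discrete velocity space,
`Q` the discrete pressure-pair space (with `φ0`, `φ1` the `L²` and `H¹` seminorms of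
its `H¹`-component), and `W` the discrete deflection space (with seminorms `w0`, `w2`
whose combination is equivalent to the full norm). -/
theorem stmt_19 {V Q W : Type*}
    [NormedAddCommGroup V] [InnerProductSpace ℝ V] [CompleteSpace V]
    [NormedAddCommGroup Q] [InnerProductSpace ℝ Q] [CompleteSpace Q]
    [NormedAddCommGroup W] [InnerProductSpace ℝ W] [CompleteSpace W]
    (ah : V →L[ℝ] V →L[ℝ] ℝ) (bh : V →L[ℝ] Q →L[ℝ] ℝ)
    (c1h : Q →L[ℝ] Q →L[ℝ] ℝ) (dh eh b3h : Q →L[ℝ] W →L[ℝ] ℝ)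
    (c2h : W →L[ℝ] W →L[ℝ] ℝ)
    (φ0 φ1 : Q → ℝ) (w0 w2 : W → ℝ)
    (α β' τ c₀ κ ρp D Cs2 Cs3 Cs4 Cs5 CW : ℝ)
    (hα : 0 < α) (hβ' : 0 < β') (hτ : 0 < τ) (hc₀ : 0 < c₀) (hκ : 0 < κ)
    (hρp : 0 < ρp) (hD : 0 < D) (hCs2 : 0 < Cs2) (hCs3 : 0 < Cs3)
    (hCs4 : 0 < Cs4) (hCs5 : 0 < Cs5) (hCW : 0 < CW)
    (hφ0 : ∀ q : Q, 0 ≤ φ0 q) (hw0 : ∀ ζ : W, 0 ≤ w0 ζ)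
    (h_coer : ∀ v : V, α * ‖v‖ ^ 2 ≤ ah v v)
    (h_infsup : ∀ q : Q, β' * ‖q‖ ≤ ⨆ v : {v : V // v ≠ 0}, bh v.1 q / ‖v.1‖)
    (hc1_low : ∀ q : Q,
      (c₀ / (τ * Cs2)) * φ0 q ^ 2 + (κ / Cs3) * φ1 q ^ 2 ≤ c1h q q)
    (hc2_low : ∀ ζ : W,
      (ρp / (τ ^ 3 * Cs4)) * w0 ζ ^ 2 + (D / (τ * Cs5)) * w2 ζ ^ 2 ≤ c2h ζ ζ)
    (hb3_bdd : ∀ (q : Q) (ζ : W), |b3h q ζ| ≤ (1 / τ) * (φ0 q * w0 ζ))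
    (hcross : ∀ (q : Q) (ζ : W), eh q ζ - dh q ζ = -(2 * b3h q ζ))
    (hWnorm : ∀ ζ : W, ‖ζ‖ ^ 2 ≤ CW * (w0 ζ ^ 2 + w2 ζ ^ 2))
    (hε : ∃ ε : ℝ, Cs2 / c₀ < ε ∧ ε < (ρp / τ ^ 2) / Cs4)
    (u : V) (p : Q) (w : W)
    (heq1 : ∀ v : V, ah u v + bh v p = 0)
    (heq2 : ∀ q : Q, bh u q - c1h p q + dh q w = 0)
    (heq3 : ∀ ζ : W, eh p ζ + c2h w ζ = 0) :
    u = 0 ∧ p = 0 ∧ w = 0 := by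

  obtain ⟨ε, hε1, hε2⟩ := hε
  have hεpos : 0 < ε := lt_trans (div_pos hCs2 hc₀) hε1
  -- diagonal testing
  have E1 := heq1 u
  have E2 := heq2 p
  have E3 := heq3 w
  have hcr := hcross p w
  have key : ah u u + c1h p p + c2h w w = 2 * b3h p w := by linarith
  have hb3 := (abs_le.mp (hb3_bdd p w)).2
  have hmaster : α * ‖u‖ ^ 2 + (c₀ / (τ * Cs2)) * φ0 p ^ 2 + (κ / Cs3) * φ1 p ^ 2
      + (ρp / (τ ^ 3 * Cs4)) * w0 w ^ 2 + (D / (τ * Cs5)) * w2 w ^ 2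
      ≤ 2 * ((1 / τ) * (φ0 p * w0 w)) := by
    have h1 := h_coer u
    have h2 := hc1_low p
    have h3 := hc2_low w
    linarith
  -- Young's inequality with parameter ε, divided by τ
  have hy0 : 2 * (φ0 p * w0 w) ≤ (1 / ε) * φ0 p ^ 2 + ε * w0 w ^ 2 := by
    rw [← sub_nonneg]
    have : (1 / ε) * φ0 p ^ 2 + ε * w0 w ^ 2 - 2 * (φ0 p * w0 w)
        = (φ0 p - ε * w0 w) ^ 2 / ε := by field_simp; ring
    rw [this]
    positivity
  have hyoung : 2 * ((1 / τ) * (φ0 p * w0 w))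
      ≤ (1 / (τ * ε)) * φ0 p ^ 2 + (ε / τ) * w0 w ^ 2 := by
    calc 2 * ((1 / τ) * (φ0 p * w0 w)) = (1 / τ) * (2 * (φ0 p * w0 w)) := by ring
      _ ≤ (1 / τ) * ((1 / ε) * φ0 p ^ 2 + ε * w0 w ^ 2) :=
          mul_le_mul_of_nonneg_left hy0 (by positivity)
      _ = (1 / (τ * ε)) * φ0 p ^ 2 + (ε / τ) * w0 w ^ 2 := by
          field_simp
  have hco1 : (1:ℝ) / (τ * ε) < c₀ / (τ * Cs2) := by
    rw [div_lt_div_iff₀ (by positivity) (by positivity)]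
    have : Cs2 < ε * c₀ := (div_lt_iff₀ hc₀).mp hε1
    nlinarith
  have hco2 : ε / τ < ρp / (τ ^ 3 * Cs4) := by
    rw [div_lt_div_iff₀ (by positivity) (by positivity)]
    have : ε * Cs4 < ρp / τ ^ 2 := (lt_div_iff₀ hCs4).mp hε2
    have h2 : ε * Cs4 * τ ^ 2 < ρp := by
      have := (lt_div_iff₀ (by positivity : (0:ℝ) < τ ^ 2)).mp this
      linarith
    nlinarith
  have t1 : 0 ≤ α * ‖u‖ ^ 2 := by positivity
  have t2 : 0 ≤ (c₀ / (τ * Cs2) - 1 / (τ * ε)) * φ0 p ^ 2 := by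
    have := sub_pos.mpr hco1; positivity
  have t3 : 0 ≤ (κ / Cs3) * φ1 p ^ 2 := by positivity
  have t4 : 0 ≤ (ρp / (τ ^ 3 * Cs4) - ε / τ) * w0 w ^ 2 := by
    have := sub_pos.mpr hco2; positivity
  have t5 : 0 ≤ (D / (τ * Cs5)) * w2 w ^ 2 := by positivity
  have hfin : α * ‖u‖ ^ 2 + (c₀ / (τ * Cs2) - 1 / (τ * ε)) * φ0 p ^ 2
      + (κ / Cs3) * φ1 p ^ 2 + (ρp / (τ ^ 3 * Cs4) - ε / τ) * w0 w ^ 2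
      + (D / (τ * Cs5)) * w2 w ^ 2 ≤ 0 := by linarith
  -- u = 0
  have hu2 : ‖u‖ ^ 2 ≤ 0 :=
    le_of_mul_le_mul_left (by linarith : α * ‖u‖ ^ 2 ≤ α * 0) hα
  have hu : u = 0 := norm_eq_zero.mp
    ((pow_eq_zero_iff two_ne_zero).mp (le_antisymm hu2 (sq_nonneg _)))
  -- w = 0
  have hw02 : w0 w ^ 2 ≤ 0 :=
    le_of_mul_le_mul_left
      (by linarith : (ρp / (τ ^ 3 * Cs4) - ε / τ) * w0 w ^ 2 ≤ (ρp / (τ ^ 3 * Cs4) - ε / τ) * 0)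
      (sub_pos.mpr hco2)
  have hw22 : w2 w ^ 2 ≤ 0 :=
    le_of_mul_le_mul_left
      (by linarith : (D / (τ * Cs5)) * w2 w ^ 2 ≤ (D / (τ * Cs5)) * 0)
      (div_pos hD (by positivity))
  have hwn : ‖w‖ ^ 2 ≤ 0 := by
    refine le_trans (hWnorm w) ?_
    have h1 : w0 w ^ 2 + w2 w ^ 2 ≤ 0 := by linarith
    have := mul_le_mul_of_nonneg_left h1 hCW.le
    simpa using this
  have hw : w = 0 := norm_eq_zero.mp
    ((pow_eq_zero_iff two_ne_zero).mp (le_antisymm hwn (sq_nonneg _)))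
  -- p = 0 via inf-sup
  have hbvp : ∀ v : V, bh v p = 0 := by
    intro v
    have := heq1 v
    rw [hu] at this
    simpa using this
  have hsup : (⨆ v : {v : V // v ≠ 0}, bh v.1 p / ‖v.1‖) ≤ 0 :=
    Real.iSup_nonpos (fun v => by rw [hbvp v.1]; simp)
  have hp : p = 0 := by
    have := le_trans (h_infsup p) hsup
    have : ‖p‖ ≤ 0 := by nlinarith [norm_nonneg p]
    exact norm_eq_zero.mp (le_antisymm this (norm_nonneg p))
  exact ⟨hu, hp, hw⟩
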